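/- Let M = (S, A, s0, p, γ) be a finite discounted MDP without reward and π a deterministic policy. Let T_{p,π} : ℝ^S × ℝ^{S×(A−1)} → ℝ^{S×A} be the linear map sending (V, A) to the reward r with r(s,a) = V(s) − γ ∑_{s'} p(s'|s,a) V(s') for a = π(s), and r(s,a) = V(s) − γ ∑_{s'} p(s'|s,a) V(s') + A(s,a) for a ≠ π(s), where A ∈ ℝ^{S×(A−1)} has one entry A(s,a) per pair (s,a) with a ≠ π(s). Let W_{p,π} ∈ ℝ^{S×S} be the matrix with W_{p,π}(s,s') = 1{s'=s} − γ p(s'|s,π(s)). Then |det(T_{p,π})| = |det(W_{p,π})|, where det(T_{p,π}) is the determinant of T_{p,π} viewed as a linear endomorphism of ℝ^{S·A} (identifying ℝ^S × ℝ^{S×(A−1)} with ℝ^{S·A}). -/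

import Mathlib

open scoped ENNReal

open scoped BigOperators
open MeasureTheory

/-- A finite discounted MDP without reward. -/
structure MDP (S A : Type) [Fintype S] [Fintype A] where
  s0 : S
  p : S → A → S → ℝ
  p_nonneg : ∀ s a s', 0 ≤ p s a s'
  p_sum_one : ∀ s a, ∑ s', p s a s' = 1
  disc : ℝ
  disc_nonneg : 0 ≤ disc
  disc_lt_one : disc < 1

section Defs

variable {S A : Type} [Fintype S] [Fintype A] [DecidableEq S] [DecidableEq A]

/-- `π` is a (stochastic) policy: each `π s` is a probability distribution on actions. -/
def IsPolicy (π : S → A → ℝ) : Prop :=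
  (∀ s a, 0 ≤ π s a) ∧ ∀ s, ∑ a, π s a = 1

open Classical in
/-- The stochastic policy induced by a deterministic policy `d`. -/
noncomputable def detPolicy (d : S → A) : S → A → ℝ :=
  fun s a => if a = d s then 1 else 0

/-- The state-transition matrix of a policy. -/
noncomputable def Pmat (M : MDP S A) (π : S → A → ℝ) : Matrix S S ℝ :=
  Matrix.of fun s s' => ∑ a, π s a * M.p s a s'

/-- The value function `V^π(s; p, r)`. -/
noncomputable def Vpi (M : MDP S A) (π : S → A → ℝ) (r : S × A → ℝ) (s : S) : ℝ :=
  ∑' t : ℕ, M.disc ^ t * ((Pmat M π ^ t).mulVec (fun s' => ∑ a, π s' a * r (s', a))) s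

/-- The optimal value function `V*(s; p, r)`. -/
noncomputable def Vstar (M : MDP S A) (r : S × A → ℝ) (s : S) : ℝ :=
  ⨆ π : {π : S → A → ℝ // IsPolicy π}, Vpi M π.1 r s

noncomputable def Qpi (M : MDP S A) (π : S → A → ℝ) (r : S × A → ℝ) (s : S) (a : A) : ℝ :=
  r (s, a) + M.disc * ∑ s', M.p s a s' * Vpi M π r s'

noncomputable def Api (M : MDP S A) (π : S → A → ℝ) (r : S × A → ℝ) (s : S) (a : A) : ℝ :=
  Qpi M π r s a - Vpi M π r s

noncomputable def Qstar (M : MDP S A) (r : S × A → ℝ) (s : S) (a : A) : ℝ :=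
  r (s, a) + M.disc * ∑ s', M.p s a s' * Vstar M r s'

noncomputable def Astar (M : MDP S A) (r : S × A → ℝ) (s : S) (a : A) : ℝ :=
  Qstar M r s a - Vstar M r s

/-- The soft (entropy-regularized) value function `V^π_λ(s; p, r)`. -/
noncomputable def VpiSoft (M : MDP S A) (lam : ℝ) (π : S → A → ℝ) (r : S × A → ℝ) (s : S) : ℝ :=
  ∑' t : ℕ, M.disc ^ t *
    ((Pmat M π ^ t).mulVec
      (fun s' => ∑ a, π s' a * (r (s', a) - lam * Real.log (π s' a)))) s

noncomputable def VstarSoft (M : MDP S A) (lam : ℝ) (r : S × A → ℝ) (s : S) : ℝ :=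
  ⨆ π : {π : S → A → ℝ // IsPolicy π}, VpiSoft M lam π.1 r s

noncomputable def QstarSoft (M : MDP S A) (lam : ℝ) (r : S × A → ℝ) (s : S) (a : A) : ℝ :=
  r (s, a) + M.disc * ∑ s', M.p s a s' * VstarSoft M lam r s'

noncomputable def AstarSoft (M : MDP S A) (lam : ℝ) (r : S × A → ℝ) (s : S) (a : A) : ℝ :=
  QstarSoft M lam r s a - VstarSoft M lam r s

/-- The OPT feasible set `R^{OPT,S̄}_{M,d}` of a deterministic policy `d`. -/
def ROPT (M : MDP S A) (Sbar : Set S) (d : S → A) : Set (S × A → ℝ) :=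
  {r | ∀ s ∈ Sbar, ∀ a, Qstar M r s a ≤ Qstar M r s (d s)}

/-- The MCE feasible set `R^{MCE,S}_{M,π}` (with `S̄ = S`). -/
def RMCE (M : MDP S A) (lam : ℝ) (π : S → A → ℝ) : Set (S × A → ℝ) :=
  {r | ∀ s a, π s a =
      Real.exp (QstarSoft M lam r s a / lam) / ∑ a', Real.exp (QstarSoft M lam r s a' / lam)}

/-- The BIRL feasible set `R^{BIRL,S}_{M,π}` (with `S̄ = S`). -/
def RBIRL (M : MDP S A) (bet : ℝ) (π : S → A → ℝ) : Set (S × A → ℝ) :=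
  {r | ∀ s a, π s a =
      Real.exp (Qstar M r s a / bet) / ∑ a', Real.exp (Qstar M r s a' / bet)}

open Classical in
/-- The matrix `W_{p,π}`. -/
noncomputable def Wmat (M : MDP S A) (π : S → A → ℝ) : Matrix S S ℝ :=
  Matrix.of fun s s' => (if s' = s then (1 : ℝ) else 0) - M.disc * ∑ a, π s a * M.p s a s'

/-- `k_π := |det W_{p,π}|^{-1/|S|}`. -/
noncomputable def kpi (M : MDP S A) (π : S → A → ℝ) : ℝ :=
  |(Wmat M π).det| ^ (-(1 : ℝ) / (Fintype.card S : ℝ))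

/-- `𝒮R^{OPT}_M`. -/
def SROPT (M : MDP S A) (C1 C2 : ℝ) : Set (S × A → ℝ) :=
  {r | ∀ π : S → A → ℝ, IsPolicy π → (∀ s, Vpi M π r s = Vstar M r s) →
      ∀ s a, |Vpi M π r s| ≤ C1 * kpi M π ∧ |Api M π r s a| ≤ C2}

/-- `𝒮R^{MCE}_M`. -/
def SRMCE (M : MDP S A) (lam C1 C2 : ℝ) : Set (S × A → ℝ) :=
  {r | ∀ s a, |VstarSoft M lam r s| ≤ C1 ∧ |AstarSoft M lam r s a| ≤ C2}

/-- `𝒮R^{BIRL}_M`. -/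
def SRBIRL (M : MDP S A) (C1 C2 : ℝ) : Set (S × A → ℝ) :=
  {r | ∀ s a, |Vstar M r s| ≤ C1 ∧ |Astar M r s a| ≤ C2}

/-- Discounted state occupancy `∑_{t≥0} γ^t P_{M,π}(s_t = s)`. -/
noncomputable def occ (M : MDP S A) (π : S → A → ℝ) (s : S) : ℝ :=
  ∑' t : ℕ, M.disc ^ t * (Pmat M π ^ t) M.s0 s

/-- The support `S_{M,π}` of a policy: states reachable with positive probability. -/
def supp (M : MDP S A) (π : S → A → ℝ) : Set S := {s | 0 < occ M π s}

end Defs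

/-- The unit hypercube `[-1,1]^{S×A}`. -/
def cube (S A : Type) [Fintype S] [Fintype A] : Set (S × A → ℝ) :=
  {r | ∀ sa, |r sa| ≤ 1}


open Classical in
/-- The linear operator `T_{p,π}` of Eq. (14), written as an endomorphism of `ℝ^{S×A}` under
the natural identification of `ℝ^S × ℝ^{S×(A-1)}` with `ℝ^{S·A}` (the `V`-coordinate of a
state `s` is stored at index `(s, π(s))`, the `A`-coordinate at `(s,a)`, `a ≠ π(s)`). -/
noncomputable def Tmat {S A : Type} [Fintype S] [Fintype A] (M : MDP S A) (d : S → A) :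
    Matrix (S × A) (S × A) ℝ :=
  Matrix.of fun sa sa' =>
    (if sa'.2 = d sa'.1 then
        (if sa'.1 = sa.1 then (1 : ℝ) else 0) - M.disc * M.p sa.1 sa.2 sa'.1
      else 0)
    + (if sa.2 ≠ d sa.1 ∧ sa' = sa then 1 else 0)

/-- Auxiliary reindexing equivalence. -/
def eEquivAux {S A : Type} [DecidableEq A] (d : S → A) :
    (S ⊕ {sa : S × A // sa.2 ≠ d sa.1}) ≃ S × A where
  toFun := Sum.elim (fun s => (s, d s)) Subtype.val
  invFun := fun sa => if h : sa.2 = d sa.1 then Sum.inl sa.1 else Sum.inr ⟨sa, h⟩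
  left_inv := by
    rintro (s | ⟨sa, h⟩)
    · simp
    · simp [h]
  right_inv := by
    intro sa
    by_cases h : sa.2 = d sa.1
    · simp only [dif_pos h, Sum.elim_inl]
      exact Prod.ext rfl h.symm
    · simp [h]

/-- `|det T_{p,π}| = |det W_{p,π}|` for a deterministic policy `π`. -/
theorem statement16 {S A : Type} [Fintype S] [Fintype A] [DecidableEq S] [DecidableEq A]
    (M : MDP S A) (d : S → A) :
    |(Tmat M d).det| = |(Wmat M (detPolicy d)).det| := by
  classical
  have h1 : (Tmat M d).det =
      ((Tmat M d).submatrix (eEquivAux d) (eEquivAux d)).det :=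
    (Matrix.det_submatrix_equiv_self _ _).symm
  have h2 : (Tmat M d).submatrix (eEquivAux d) (eEquivAux d) =
      Matrix.fromBlocks (Wmat M (detPolicy d)) 0
        (Matrix.of fun (sa : {sa : S × A // sa.2 ≠ d sa.1}) s' =>
          (if s' = sa.1.1 then (1 : ℝ) else 0) - M.disc * M.p sa.1.1 sa.1.2 s') 1 := by
    ext i j
    cases i with
    | inl s =>
      cases j with
      | inl s' =>
        simp [Tmat, Wmat, detPolicy, eEquivAux, Matrix.submatrix, ite_mul,
          Finset.sum_ite_eq']
        by_cases h : s' = s <;> simp [h]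
      | inr j =>
        simp [Tmat, eEquivAux, Matrix.submatrix, j.2]
    | inr i =>
      cases j with
      | inl s' =>
        simp only [Tmat, eEquivAux, Matrix.submatrix, Matrix.of_apply, Equiv.coe_fn_mk,
          Sum.elim_inl, Sum.elim_inr, Matrix.fromBlocks_apply₂₁]
        have h0 : ¬((↑i : S × A).2 ≠ d (↑i : S × A).1 ∧ (s', d s') = (↑i : S × A)) := by
          rintro ⟨h', h⟩
          exact h' (by rw [← h])
        rw [if_pos trivial]; simp only [h0, if_false, add_zero]
        congr 1
        by_cases h : s' = (↑i : S × A).1 <;> simp [h]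
      | inr j =>
        have hne : j.1.2 ≠ d j.1.1 := j.2
        simp only [Tmat, eEquivAux, Matrix.submatrix, Matrix.of_apply, Equiv.coe_fn_mk,
          Sum.elim_inr, Matrix.fromBlocks_apply₂₂]
        simp only [hne, if_false, zero_add]; rw [Matrix.one_apply]
        by_cases h : i = j
        · subst h; simp [hne]
        · have hc : ¬((↑j : S × A) = ↑i) := fun e => h (Subtype.ext e).symm
          simp [hc, h]
  rw [h1, h2, Matrix.det_fromBlocks_zero₁₂, Matrix.det_one, mul_one]
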